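/- For constants φ > 0, H > 0, μ ≥ 1, and any points p, p⁰, p_m ∈ ℝ², the inequality log₂(1 + φ/(H² + ‖p − p_m‖²)^μ) ≥ log₂(1 + φ/(H² + ‖p⁰ − p_m‖²)^μ) − [μ·φ·log₂(e)·(‖p − p_m‖² − ‖p⁰ − p_m‖²)] / ([φ + (H² + ‖p⁰ − p_m‖²)^μ]·(H² + ‖p⁰ − p_m‖²)) holds. -/

import Mathlib

lemma aux_hasDeriv (φ μ : ℝ) (hφ : 0 < φ) {u : ℝ} (hu : 0 < u) :
    HasDerivAt (fun x : ℝ => Real.log (1 + φ / x ^ μ))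
      (-(μ * φ) / (u * (φ + u ^ μ))) u := by
  have hx : (0:ℝ) < u ^ μ := Real.rpow_pos_of_pos hu μ
  have hpow : HasDerivAt (fun x : ℝ => x ^ μ) (μ * u ^ (μ - 1)) u :=
    Real.hasDerivAt_rpow_const (Or.inl hu.ne')
  have h1 : HasDerivAt (fun x : ℝ => 1 + φ * (x ^ μ)⁻¹)
      (φ * (-(μ * u ^ (μ - 1)) / (u ^ μ) ^ 2)) u :=
    ((hpow.inv hx.ne').const_mul φ).const_add 1
  have hden : (0:ℝ) < 1 + φ * (u ^ μ)⁻¹ := by positivity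
  have h2 := h1.log hden.ne'
  have hk : u ^ (μ - 1) = u ^ μ / u := by
    rw [eq_div_iff hu.ne', ← Real.rpow_add_one hu.ne']; ring_nf
  have heq : φ * (-(μ * u ^ (μ - 1)) / (u ^ μ) ^ 2) / (1 + φ * (u ^ μ)⁻¹)
      = -(μ * φ) / (u * (φ + u ^ μ)) := by
    rw [hk]; field_simp; ring
  rw [heq] at h2
  simpa [div_eq_mul_inv] using h2

lemma aux_mono (φ μ : ℝ) (hφ : 0 < φ) (hμ : 0 ≤ μ) {x y : ℝ} (hx : 0 < x)
    (hxy : x ≤ y) : x * (φ + x ^ μ) ≤ y * (φ + y ^ μ) := by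
  have hpx : (0:ℝ) < x ^ μ := Real.rpow_pos_of_pos hx μ
  have := Real.rpow_le_rpow hx.le hxy hμ
  nlinarith

lemma aux_key (φ μ : ℝ) (hφ : 0 < φ) (hμ : 1 ≤ μ) {a b : ℝ} (ha : 0 < a)
    (hb : 0 < b) :
    Real.log (1 + φ / a ^ μ) - μ * φ * (b - a) / ((φ + a ^ μ) * a)
      ≤ Real.log (1 + φ / b ^ μ) := by
  have hμ0 : (0:ℝ) ≤ μ := le_trans zero_le_one hμ
  have hμφ : (0:ℝ) < μ * φ := mul_pos (lt_of_lt_of_le one_pos hμ) hφ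
  have hapos : (0:ℝ) < a * (φ + a ^ μ) := mul_pos ha (by positivity)
  have heq5 : μ * φ * (b - a) / ((φ + a ^ μ) * a)
      = -(-(μ * φ) / (a * (φ + a ^ μ)) * (b - a)) := by ring
  rcases lt_trichotomy a b with hab | hab | hab
  · obtain ⟨c, hc, hceq⟩ := exists_hasDerivAt_eq_slope
      (fun x : ℝ => Real.log (1 + φ / x ^ μ))
      (fun u => -(μ * φ) / (u * (φ + u ^ μ))) hab
      (fun x hx => (aux_hasDeriv φ μ hφ (lt_of_lt_of_le ha hx.1)).continuousAt.continuousWithinAt)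
      (fun x hx => aux_hasDeriv φ μ hφ (lt_trans ha hx.1))
    have hc0 : 0 < c := lt_trans ha hc.1
    have hcpos : (0:ℝ) < c * (φ + c ^ μ) := mul_pos hc0 (by positivity)
    have hmono := aux_mono φ μ hφ hμ0 ha hc.1.le
    have hderle : -(μ * φ) / (a * (φ + a ^ μ)) ≤ -(μ * φ) / (c * (φ + c ^ μ)) := by
      rw [neg_div, neg_div]
      exact neg_le_neg (div_le_div_of_nonneg_left hμφ.le hapos hmono)
    have h3 : Real.log (1 + φ / b ^ μ) - Real.log (1 + φ / a ^ μ)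
        = -(μ * φ) / (c * (φ + c ^ μ)) * (b - a) := by
      rw [hceq, div_mul_cancel₀ _ (sub_ne_zero.mpr hab.ne')]
    have h4 := mul_le_mul_of_nonneg_right hderle (by linarith : (0:ℝ) ≤ b - a)
    linarith
  · simp [hab]
  · obtain ⟨c, hc, hceq⟩ := exists_hasDerivAt_eq_slope
      (fun x : ℝ => Real.log (1 + φ / x ^ μ))
      (fun u => -(μ * φ) / (u * (φ + u ^ μ))) hab
      (fun x hx => (aux_hasDeriv φ μ hφ (lt_of_lt_of_le hb hx.1)).continuousAt.continuousWithinAt)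
      (fun x hx => aux_hasDeriv φ μ hφ (lt_trans hb hx.1))
    have hc0 : 0 < c := lt_trans hb hc.1
    have hcpos : (0:ℝ) < c * (φ + c ^ μ) := mul_pos hc0 (by positivity)
    have hmono := aux_mono φ μ hφ hμ0 hc0 hc.2.le
    have hderle : -(μ * φ) / (c * (φ + c ^ μ)) ≤ -(μ * φ) / (a * (φ + a ^ μ)) := by
      rw [neg_div, neg_div]
      exact neg_le_neg (div_le_div_of_nonneg_left hμφ.le hcpos hmono)
    have h3 : Real.log (1 + φ / a ^ μ) - Real.log (1 + φ / b ^ μ)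
        = -(μ * φ) / (c * (φ + c ^ μ)) * (a - b) := by
      rw [hceq, div_mul_cancel₀ _ (sub_ne_zero.mpr hab.ne')]
    have h4 := mul_le_mul_of_nonneg_right hderle (by linarith : (0:ℝ) ≤ a - b)
    linarith


/-- Explicit global concave lower bound (Theorem 9 / Eq. 58): for constants
`φ > 0`, `H > 0`, `μ ≥ 1` and points `p, p⁰, p_m ∈ ℝ²`,
`log₂(1 + φ/(H² + ‖p − p_m‖²)^μ)` is bounded below by its linearization in the
squared distance at `p⁰`. -/
theorem stmt_13 (φ H μ : ℝ) (hφ : 0 < φ) (hH : 0 < H) (hμ : 1 ≤ μ)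
    (p p₀ pm : EuclideanSpace ℝ (Fin 2)) :
    Real.logb 2 (1 + φ / (H ^ 2 + ‖p₀ - pm‖ ^ 2) ^ μ)
        - (μ * φ * Real.logb 2 (Real.exp 1)
            * (‖p - pm‖ ^ 2 - ‖p₀ - pm‖ ^ 2))
          / ((φ + (H ^ 2 + ‖p₀ - pm‖ ^ 2) ^ μ) * (H ^ 2 + ‖p₀ - pm‖ ^ 2))
      ≤ Real.logb 2 (1 + φ / (H ^ 2 + ‖p - pm‖ ^ 2) ^ μ) := by
  set a : ℝ := H ^ 2 + ‖p₀ - pm‖ ^ 2 with ha_def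
  set b : ℝ := H ^ 2 + ‖p - pm‖ ^ 2 with hb_def
  have ha : 0 < a := by positivity
  have hb : 0 < b := by positivity
  have hkey := aux_key φ μ hφ hμ ha hb
  have hL : (0:ℝ) < Real.log 2 := Real.log_pos (by norm_num)
  have hdiff : ‖p - pm‖ ^ 2 - ‖p₀ - pm‖ ^ 2 = b - a := by ring
  rw [Real.logb, Real.logb, Real.logb, Real.log_exp, hdiff]
  have h2 := div_le_div_of_nonneg_right hkey hL.le
  rw [sub_div] at h2
  have h3 : μ * φ * (b - a) / ((φ + a ^ μ) * a) / Real.log 2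
      = μ * φ * (1 / Real.log 2) * (b - a) / ((φ + a ^ μ) * a) := by ring
  rw [h3] at h2
  exact h2
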